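/- Let μ1 be the match produced by the student-proposing Deferred Acceptance algorithm (run with the within-group priorities ≻*_s as the schools' choice criteria) and let μ2 be the match produced by running the restricted Top Trading Cycles stage starting from μ1. Then μ2 is in the unified core: no coalition of students between-group blocks μ2 and no coalition of students within-group blocks μ2. -/

import Mathlib

/-- A school choice problem.  Students `I` and schools `S` are finite types.
A match sends each student to `some s` (a school) or `none` (unmatched, i.e.
matched to herself).  Strict preferences/priorities are encoded by injective
numerical rank functions (higher value = more preferred / higher priority);
the weak between-group priority is encoded by an arbitrary rank function,
whose level sets are the priority groups. -/
structure SchoolChoice (I S : Type*) [Fintype I] [Fintype S] where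
  /-- the capacity of each school -/
  q : S → ℕ
  /-- each school has at least one seat -/
  q_pos : ∀ s, 1 ≤ q s
  /-- student `i`'s strict preference over `S ∪ {i}` (`none` = being unmatched) -/
  pref : I → Option S → ℕ
  pref_inj : ∀ i, Function.Injective (pref i)
  /-- the between-group priority of school `s` (a weak order on students) -/
  btw : S → I → ℕ
  /-- the within-group priority of school `s` (a strict total order on students) -/
  wthn : S → I → ℕ
  wthn_inj : ∀ s, Function.Injective (wthn s)
  /-- the within-group priority refines the between-group priority -/
  refines : ∀ s i j, btw s i < btw s j → wthn s i < wthn s j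

namespace SchoolChoice

variable {I S : Type*} [Fintype I] [Fintype S] (P : SchoolChoice I S)

/-- `μ` is a match: no school is assigned more students than its capacity. -/
def IsMatch (μ : I → Option S) : Prop :=
  ∀ s : S, {i | μ i = some s}.ncard ≤ P.q s

/-- `μ` is individually rational: every student weakly prefers her assignment
to being unmatched. -/
def IndRational (μ : I → Option S) : Prop :=
  ∀ i, P.pref i none ≤ P.pref i (μ i)

/-- Coalition `A` prefers `ν` to `μ`: all members weakly, some member strictly. -/
def Prefers (A : Set I) (ν μ : I → Option S) : Prop :=
  (∀ i ∈ A, P.pref i (μ i) ≤ P.pref i (ν i)) ∧ ∃ i ∈ A, P.pref i (μ i) < P.pref i (ν i)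

/-- The priority group `[i]_s` of student `i` at school `s`. -/
def Group (s : S) (i : I) : Set I := {j | P.btw s j = P.btw s i}

/-- `A` can between-group enforce `ν` over `μ`: every member assigned a school
by `ν` either displaces a student of strictly lower between-group priority or
takes an empty seat (a student can always enforce becoming unmatched). -/
def BtwEnforce (A : Set I) (ν μ : I → Option S) : Prop :=
  ∀ i ∈ A, ∀ s, ν i = some s →
    (∃ j, μ j = some s ∧ P.btw s j < P.btw s i) ∨ {j | μ j = some s}.ncard < P.q s

/-- `A` between-group blocks `μ`. -/
def BtwBlocks (A : Set I) (μ : I → Option S) : Prop :=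
  ∃ ν, P.IsMatch ν ∧ P.BtwEnforce A ν μ ∧ P.Prefers A ν μ

/-- The responsive set extension `A ≿_s B` of the between-group priority:
`B` is no larger than `A`, and the students of `B` can be paired injectively
with students of `A` of weakly higher between-group priority. -/
def SetGE (s : S) (A B : Set I) : Prop :=
  B.ncard ≤ A.ncard ∧
    ∃ g : I → I, Set.InjOn g B ∧ Set.MapsTo g B A ∧ ∀ b ∈ B, P.btw s b ≤ P.btw s (g b)

/-- Set indifference `A ∼_s B` under the responsive extension. -/
def SetSim (s : S) (A B : Set I) : Prop := P.SetGE s A B ∧ P.SetGE s B A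

/-- The within-group upper contour set `U_s(i)`: the students in `i`'s priority
group at `s` with weakly higher within-group priority. -/
def UCS (s : S) (i : I) : Set I :=
  {j | P.btw s j = P.btw s i ∧ P.wthn s i ≤ P.wthn s j}

/-- The pairs `(i, j)` where `i ∈ A` is sent to `s` by `ν` and `j` is a
within-group interrupter of `i` (i.e. `j ∈ U_s(i) \ A`).  Its cardinality is
the total number of within-group interrupters across all members of `A`
matched to `s` by `ν`. -/
def InterruptPairs (A : Set I) (ν : I → Option S) (s : S) : Set (I × I) :=
  {p | p.1 ∈ A ∧ ν p.1 = some s ∧ p.2 ∈ P.UCS s p.1 ∧ p.2 ∉ A}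

/-- `A` can within-group enforce `ν` over `μ`: for every school in `ν(A)`,
(1) `ν⁻¹(s) ∼_s μ⁻¹(s)` and (2) the total number of within-group interrupters
is at most `q s - |ν⁻¹(s)|`. -/
def WthnEnforce (A : Set I) (ν μ : I → Option S) : Prop :=
  ∀ s : S, (∃ i ∈ A, ν i = some s) →
    P.SetSim s {j | ν j = some s} {j | μ j = some s} ∧
    (P.InterruptPairs A ν s).ncard ≤ P.q s - {j | ν j = some s}.ncard

/-- `A` within-group blocks `μ`. -/
def WthnBlocks (A : Set I) (μ : I → Option S) : Prop :=
  ∃ ν, P.IsMatch ν ∧ P.WthnEnforce A ν μ ∧ P.Prefers A ν μ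

/-- The unified core: no coalition between-group blocks nor within-group
blocks the match. -/
def UnifiedCore (μ : I → Option S) : Prop :=
  (∀ A : Set I, ¬ P.BtwBlocks A μ) ∧ ∀ A : Set I, ¬ P.WthnBlocks A μ

/-- A match is fair (w.r.t. the within-group priorities, à la Gale–Shapley):
no student prefers a school that has an empty seat or admits a student of
strictly lower within-group priority. -/
def Fair (μ : I → Option S) : Prop :=
  ¬ ∃ (i : I) (s : S), P.pref i (μ i) < P.pref i (some s) ∧
    ((∃ j, μ j = some s ∧ P.wthn s j < P.wthn s i) ∨ {j | μ j = some s}.ncard < P.q s)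

/-! ### The student-proposing Deferred Acceptance algorithm,
specified relationally.  The state is the map `R` sending each student to the
set of schools that have rejected her so far. -/

/-- Given rejections `R`, student `i` currently proposes to `o`: `o` is not a
school that rejected `i`, and `o` is her most-preferred such option in
`S ∪ {i}`. -/
def ProposesTo (R : I → Set S) (i : I) (o : Option S) : Prop :=
  (∀ s, o = some s → s ∉ R i) ∧
  ∀ o' : Option S, (∀ s, o' = some s → s ∉ R i) → P.pref i o' ≤ P.pref i o

/-- Given rejections `R`, school `s` now rejects `i`: `i` proposes to `s` and
at least `q s` current proposers have strictly higher within-group priority. -/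
def Rejects (R : I → Set S) (s : S) (i : I) : Prop :=
  P.ProposesTo R i (some s) ∧
  P.q s ≤ {j | P.ProposesTo R j (some s) ∧ P.wthn s i < P.wthn s j}.ncard

/-- One round of Deferred Acceptance: some school is over-demanded, and every
over-demanded school rejects all but its `≻*`-top `q s` proposers. -/
def DAStep (R R' : I → Set S) : Prop :=
  (∃ s, P.q s < {i | P.ProposesTo R i (some s)}.ncard) ∧
  ∀ i, R' i = R i ∪ {s | P.Rejects R s i}

/-- Deferred Acceptance terminates: no school is over-demanded. -/
def DATerminal (R : I → Set S) : Prop :=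
  ∀ s, {i | P.ProposesTo R i (some s)}.ncard ≤ P.q s

/-- `μ1` is the outcome of the student-proposing Deferred Acceptance
algorithm: starting from no rejections, rounds are iterated until no school is
over-demanded, and every student is matched to the agent she last proposed to. -/
def IsDAOutcome (μ1 : I → Option S) : Prop :=
  ∃ (n : ℕ) (R : ℕ → I → Set S),
    (∀ i, R 0 i = ∅) ∧ (∀ k < n, P.DAStep (R k) (R (k + 1))) ∧
    P.DATerminal (R n) ∧ ∀ i, P.ProposesTo (R n) i (μ1 i)

/-! ### The restricted Top Trading Cycles stage, starting from a match `μ1`,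
specified relationally.  The state is the pair of the set of active students
and the current assignment. -/

/-- Student `i` is initially active in the TTC stage: she is matched by `μ1`
to a school at which she lies in the lowest priority group among the students
matched there. -/
def InitActive (μ1 : I → Option S) (i : I) : Prop :=
  ∃ s, μ1 i = some s ∧ ∀ j, μ1 j = some s → P.btw s i ≤ P.btw s j

/-- School `s` is admissible to student `i` (given active students `Act`):
some active student assigned to `s` by `μ1` is in the same priority group as
`i` at `s`.  (In particular `s` is then an active school.) -/
def Admissible (μ1 : I → Option S) (Act : Set I) (i : I) (s : S) : Prop :=
  ∃ j ∈ Act, μ1 j = some s ∧ P.btw s i = P.btw s j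

/-- Active student `i` points to school `s`: `s` is her most-preferred
admissible active school. -/
def StuPoints (μ1 : I → Option S) (Act : Set I) (i : I) (s : S) : Prop :=
  i ∈ Act ∧ P.Admissible μ1 Act i s ∧
  ∀ s', P.Admissible μ1 Act i s' → P.pref i (some s') ≤ P.pref i (some s)

/-- Active school `s` points to student `i`: `i` is the `≻*_s`-highest active
student in `μ1⁻¹(s)`. -/
def SchPoints (μ1 : I → Option S) (Act : Set I) (s : S) (i : I) : Prop :=
  i ∈ Act ∧ μ1 i = some s ∧ ∀ j ∈ Act, μ1 j = some s → P.wthn s j ≤ P.wthn s i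

/-- A (pointing) cycle `i₁, s₁, …, iₙ, sₙ` of distinct active students and
active schools: each student `c k` points to school `d k`, and each school
`d k` points to the cyclically next student `c (k+1)`. -/
def IsCycle (μ1 : I → Option S) (Act : Set I) {n : ℕ}
    (c : Fin (n + 1) → I) (d : Fin (n + 1) → S) : Prop :=
  Function.Injective c ∧ Function.Injective d ∧
  (∀ k, P.StuPoints μ1 Act (c k) (d k)) ∧
  ∀ k, P.SchPoints μ1 Act (d k) (c (k + 1))

/-- One round of the restricted TTC stage: a cycle forms, each student on the
cycle is assigned the school she points to and is deactivated; all other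
assignments are unchanged. -/
def TTCStep (μ1 : I → Option S) (st st' : Set I × (I → Option S)) : Prop :=
  ∃ (n : ℕ) (c : Fin (n + 1) → I) (d : Fin (n + 1) → S),
    P.IsCycle μ1 st.1 c d ∧
    st'.1 = st.1 \ Set.range c ∧
    (∀ k, st'.2 (c k) = some (d k)) ∧
    ∀ i, i ∉ Set.range c → st'.2 i = st.2 i

/-- `μ2` is the outcome of the restricted Top Trading Cycles stage starting
from `μ1`: beginning with the initially active students and assignment `μ1`,
rounds are iterated until no student is active. -/
def IsTTCOutcome (μ1 μ2 : I → Option S) : Prop :=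
  ∃ (m : ℕ) (st : ℕ → Set I × (I → Option S)),
    st 0 = ({i | P.InitActive μ1 i}, μ1) ∧
    (∀ k < m, P.TTCStep μ1 (st k) (st (k + 1))) ∧
    (st m).1 = ∅ ∧ μ2 = (st m).2

end SchoolChoice

/-! ### Auxiliary generic lemmas -/

open Classical in
private lemma ncard_eq_filter_card {α : Type*} [Fintype α] (p : α → Prop) :
    {x | p x}.ncard = (Finset.univ.filter p).card := by
  rw [← Set.ncard_coe_finset]; congr 1; ext x; simp

/-- Top-`q` selection: in a finite set with injective rank, at least `q` elements
have fewer than `q` elements ranked above them (provided `q ≤ card`). -/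
private lemma topq_aux {α : Type*} [DecidableEq α] (r : α → ℕ) (hr : Function.Injective r) :
    ∀ (q : ℕ) (F : Finset α), q ≤ F.card →
      q ≤ (F.filter fun a => (F.filter fun b => r a < r b).card < q).card := by
  intro q
  induction q with
  | zero => intro F _; exact Nat.zero_le _
  | succ q ih =>
    intro F hF
    classical
    have hne : F.Nonempty := Finset.card_pos.mp (lt_of_lt_of_le (Nat.succ_pos q) hF)
    obtain ⟨M, hM, hMmax⟩ := F.exists_max_image r hne
    set G := F.erase M with hG
    have hMG : M ∉ G := Finset.notMem_erase _ _
    have hFG : F = insert M G := (Finset.insert_erase hM).symm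
    have hGcard : G.card = F.card - 1 := by rw [hG]; exact Finset.card_erase_of_mem hM
    have hcard' : q ≤ G.card := by omega
    have key : ∀ a ∈ G, (F.filter fun b => r a < r b).card
        = (G.filter fun b => r a < r b).card + 1 := by
      intro a ha
      have haM : r a < r M :=
        lt_of_le_of_ne (hMmax a (Finset.mem_of_mem_erase ha))
          (fun h => (Finset.ne_of_mem_erase ha) (hr h))
      rw [hFG, Finset.filter_insert, if_pos haM,
        Finset.card_insert_of_notMem (fun h => hMG (Finset.filter_subset _ _ h))]
    have hsub : insert M (G.filter fun a => (G.filter fun b => r a < r b).card < q)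
        ⊆ F.filter fun a => (F.filter fun b => r a < r b).card < q + 1 := by
      intro a ha
      rcases Finset.mem_insert.mp ha with rfl | ha
      · refine Finset.mem_filter.mpr ⟨hM, ?_⟩
        have : (F.filter fun b => r a < r b) = ∅ := by
          apply Finset.filter_eq_empty_iff.mpr
          intro b hb
          exact not_lt.mpr (hMmax b hb)
        rw [this]; simp
      · obtain ⟨haG, hacond⟩ := Finset.mem_filter.mp ha
        refine Finset.mem_filter.mpr ⟨Finset.mem_of_mem_erase haG, ?_⟩
        rw [key a haG]; omega
    have hMnot : M ∉ (G.filter fun a => (G.filter fun b => r a < r b).card < q) :=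
      fun h => hMG (Finset.filter_subset _ _ h)
    calc q + 1 ≤ (G.filter fun a => (G.filter fun b => r a < r b).card < q).card + 1 := by
          have := ih G hcard'; omega
      _ = (insert M (G.filter fun a => (G.filter fun b => r a < r b).card < q)).card :=
          (Finset.card_insert_of_notMem hMnot).symm
      _ ≤ _ := Finset.card_le_card hsub

namespace SchoolChoice

variable {I S : Type*} [Fintype I] [Fintype S] (P : SchoolChoice I S)

/-! ### Deferred Acceptance lemmas -/

lemma proposesTo_unique {R : I → Set S} {i : I} {o o' : Option S}
    (h : P.ProposesTo R i o) (h' : P.ProposesTo R i o') : o = o' :=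
  P.pref_inj i (le_antisymm (h'.2 o h.1) (h.2 o' h'.1))

/-- A student not rejected by her current proposal keeps proposing to it. -/
lemma proposesTo_step {Rk Rk' : I → Set S} (hstep : P.DAStep Rk Rk') {i : I} {s : S}
    (h : P.ProposesTo Rk i (some s)) (hnr : ¬ P.Rejects Rk s i) :
    P.ProposesTo Rk' i (some s) := by
  obtain ⟨-, hR'⟩ := hstep
  constructor
  · intro s' hs'
    obtain rfl : s = s' := by injection hs'
    rw [hR' i]
    rintro (hmem | hmem)
    · exact h.1 s rfl hmem
    · exact hnr hmem
  · intro o' ho'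
    refine h.2 o' ?_
    intro s'' hs''
    intro hmem
    exact ho' s'' hs'' (by rw [hR' i]; exact Or.inl hmem)

/-- Set version of `topq_aux`. -/
private lemma topq_set {α : Type*} [Fintype α] (r : α → ℕ) (hr : Function.Injective r)
    (q : ℕ) (V : Set α) (h : q ≤ V.ncard) :
    q ≤ {a | a ∈ V ∧ {b | b ∈ V ∧ r a < r b}.ncard < q}.ncard := by
  classical
  set F := (Set.toFinite V).toFinset with hF
  have hmemF : ∀ a, a ∈ F ↔ a ∈ V := fun a => Set.Finite.mem_toFinset _
  have h1 : q ≤ F.card := by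
    rwa [Set.ncard_eq_toFinset_card _ (Set.toFinite V)] at h
  have htop := topq_aux r hr q F h1
  refine le_trans htop ?_
  have hsub : ↑(F.filter fun a => (F.filter fun b => r a < r b).card < q)
      ⊆ {a | a ∈ V ∧ {b | b ∈ V ∧ r a < r b}.ncard < q} := by
    intro a ha
    simp only [Finset.coe_filter, Set.mem_setOf_eq] at ha
    obtain ⟨haF, hacond⟩ := ha
    refine ⟨(hmemF a).mp haF, ?_⟩
    have : {b | b ∈ V ∧ r a < r b} = ↑(F.filter fun b => r a < r b) := by
      ext b
      simp only [Set.mem_setOf_eq, Finset.coe_filter, Finset.mem_filter, hmemF]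
    rw [this, Set.ncard_coe_finset]
    exact hacond
  calc (F.filter fun a => (F.filter fun b => r a < r b).card < q).card
      = (↑(F.filter fun a => (F.filter fun b => r a < r b).card < q) : Set α).ncard :=
        (Set.ncard_coe_finset _).symm
    _ ≤ _ := Set.ncard_le_ncard hsub (Set.toFinite _)

/-- The key DA invariant: once a school has `q s` proposers above rank `w`,
this persists through a DA round. -/
lemma da_invariant_step {Rk Rk' : I → Set S} (hstep : P.DAStep Rk Rk') (s : S) (w : ℕ)
    (h : P.q s ≤ {j | P.ProposesTo Rk j (some s) ∧ w < P.wthn s j}.ncard) :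
    P.q s ≤ {j | P.ProposesTo Rk' j (some s) ∧ w < P.wthn s j}.ncard := by
  classical
  set V : Set I := {j | P.ProposesTo Rk j (some s) ∧ w < P.wthn s j} with hV
  have htop := topq_set (P.wthn s) (P.wthn_inj s) (P.q s) V h
  refine le_trans htop (Set.ncard_le_ncard ?_ (Set.toFinite _))
  rintro a ⟨haV, hacond⟩
  obtain ⟨haprop, haw⟩ : P.ProposesTo Rk a (some s) ∧ w < P.wthn s a := haV
  have hnr : ¬ P.Rejects Rk s a := by
    rintro ⟨-, hrej⟩
    have hset : {j | P.ProposesTo Rk j (some s) ∧ P.wthn s a < P.wthn s j}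
        = {b | b ∈ V ∧ P.wthn s a < P.wthn s b} := by
      ext j
      simp only [Set.mem_setOf_eq, hV]
      constructor
      · rintro ⟨hp, hw⟩; exact ⟨⟨hp, lt_trans haw hw⟩, hw⟩
      · rintro ⟨⟨hp, -⟩, hw⟩; exact ⟨hp, hw⟩
    rw [hset] at hrej
    omega
  exact ⟨P.proposesTo_step hstep haprop hnr, haw⟩

/-- Rejection extraction: a school in the final rejection set was the site of
an actual rejection event. -/
lemma exists_reject {R : ℕ → I → Set S} (hR0 : ∀ i, R 0 i = ∅) :
    ∀ n, (∀ k < n, P.DAStep (R k) (R (k + 1))) → ∀ {i s}, s ∈ R n i →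
      ∃ k < n, P.Rejects (R k) s i := by
  intro n
  induction n with
  | zero => intro _ i s hs; rw [hR0 i] at hs; exact absurd hs (Set.notMem_empty s)
  | succ n ih =>
    intro hstep i s hs
    by_cases hsn : s ∈ R n i
    · obtain ⟨k, hk, hrej⟩ := ih (fun k hk => hstep k (Nat.lt_succ_of_lt hk)) hsn
      exact ⟨k, Nat.lt_succ_of_lt hk, hrej⟩
    · obtain ⟨-, hR'⟩ := hstep n (Nat.lt_succ_self n)
      rw [hR' i] at hs
      rcases hs with hs | hs
      · exact absurd hs hsn
      · exact ⟨n, Nat.lt_succ_self n, hs⟩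

/-- Main DA fact: if `i` strictly prefers `s` to her DA assignment then `s` is
full and everyone assigned there has strictly higher within-group priority. -/
lemma da_fair {n : ℕ} {R : ℕ → I → Set S} {μ1 : I → Option S}
    (hR0 : ∀ i, R 0 i = ∅) (hstep : ∀ k < n, P.DAStep (R k) (R (k + 1)))
    (hterm : P.DATerminal (R n)) (hprop : ∀ i, P.ProposesTo (R n) i (μ1 i))
    {i : I} {s : S}
    (henvy : P.pref i (μ1 i) < P.pref i (some s)) :
    {j | μ1 j = some s}.ncard = P.q s ∧ ∀ j, μ1 j = some s → P.wthn s i < P.wthn s j := by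
  have hsR : s ∈ R n i := by
    by_contra hs
    have := (hprop i).2 (some s) (by
      rintro s' hs'
      obtain rfl : s = s' := by injection hs'
      exact hs)
    omega
  obtain ⟨k, hk, hrej⟩ := P.exists_reject hR0 n hstep hsR
  have hinv : ∀ l, k ≤ l → l ≤ n →
      P.q s ≤ {j | P.ProposesTo (R l) j (some s) ∧ P.wthn s i < P.wthn s j}.ncard := by
    intro l hkl
    induction l, hkl using Nat.le_induction with
    | base => intro _; exact hrej.2
    | succ l hl ih =>
      intro hln
      exact P.da_invariant_step (hstep l (by omega)) s _ (ih (by omega))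
  have hn := hinv n (le_of_lt hk) le_rfl
  have hFeq : {j | P.ProposesTo (R n) j (some s)} = {j | μ1 j = some s} := by
    ext j
    simp only [Set.mem_setOf_eq]
    constructor
    · intro hp; exact (P.proposesTo_unique (hprop j) hp).symm ▸ rfl
    · intro hj; rw [← hj]; exact hprop j
  have hsub : {j | P.ProposesTo (R n) j (some s) ∧ P.wthn s i < P.wthn s j}
      ⊆ {j | P.ProposesTo (R n) j (some s)} := fun j hj => hj.1
  have hterm' := hterm s
  have hle : {j | P.ProposesTo (R n) j (some s)}.ncard
      ≤ {j | P.ProposesTo (R n) j (some s) ∧ P.wthn s i < P.wthn s j}.ncard := by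
    calc {j | P.ProposesTo (R n) j (some s)}.ncard ≤ P.q s := hterm'
      _ ≤ _ := hn
  have heq := Set.eq_of_subset_of_ncard_le hsub hle (Set.toFinite _)
  constructor
  · rw [← hFeq]
    have h1 : {j | P.ProposesTo (R n) j (some s)}.ncard ≤ P.q s := hterm'
    have h2 : P.q s ≤ {j | P.ProposesTo (R n) j (some s)}.ncard :=
      le_trans hn (Set.ncard_le_ncard hsub (Set.toFinite _))
    omega
  · intro j hj
    have hjF : j ∈ {j | P.ProposesTo (R n) j (some s)} := by rw [hFeq]; exact hj
    rw [← heq] at hjF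
    exact hjF.2

/-! ### TTC lemmas -/

lemma ttc_act_subset {μ1 : I → Option S} {st st' : Set I × (I → Option S)}
    (h : P.TTCStep μ1 st st') : st'.1 ⊆ st.1 := by
  obtain ⟨n, c, d, hcyc, hact, -, -⟩ := h
  rw [hact]; exact Set.diff_subset

lemma ttc_keep_active {μ1 : I → Option S} {st st' : Set I × (I → Option S)}
    (h : P.TTCStep μ1 st st') {i : I} (hi : i ∈ st'.1) : st'.2 i = st.2 i := by
  obtain ⟨n, c, d, hcyc, hact, -, hkeep⟩ := h
  apply hkeep
  rw [hact] at hi; exact hi.2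

lemma ttc_keep_inactive {μ1 : I → Option S} {st st' : Set I × (I → Option S)}
    (h : P.TTCStep μ1 st st') {i : I} (hi : i ∉ st.1) : st'.2 i = st.2 i := by
  obtain ⟨n, c, d, hcyc, hact, -, hkeep⟩ := h
  apply hkeep
  rintro ⟨j, rfl⟩
  exact hi (hcyc.2.2.1 j).1

/-- Rigidity of the responsive set extension: mutual weak dominance yields a
bijection preserving the between-group priority exactly. -/
lemma setGE_rigid {s : S} {Bset Cset : Set I}
    (h1 : P.SetGE s Bset Cset) (h2 : P.SetGE s Cset Bset) :
    ∃ g : I → I, Set.BijOn g Cset Bset ∧ ∀ b ∈ Cset, P.btw s b = P.btw s (g b) := by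
  classical
  obtain ⟨hc1, g, hginj, hgmap, hgle⟩ := h1
  obtain ⟨hc2, g', hginj', hgmap', hgle'⟩ := h2
  have hcard : Cset.ncard = Bset.ncard := le_antisymm hc1 hc2
  have himg : g '' Cset = Bset := by
    apply Set.eq_of_subset_of_ncard_le (Set.image_subset_iff.mpr hgmap) ?_ (Set.toFinite _)
    rw [Set.ncard_image_of_injOn hginj, hcard]
  have hbij : Set.BijOn g Cset Bset :=
    ⟨hgmap, hginj, by rw [← himg]; exact Set.surjOn_image g Cset⟩
  have himg' : g' '' Bset = Cset := by
    apply Set.eq_of_subset_of_ncard_le (Set.image_subset_iff.mpr hgmap') ?_ (Set.toFinite _)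
    rw [Set.ncard_image_of_injOn hginj', hcard]
  have hbij' : Set.BijOn g' Bset Cset :=
    ⟨hgmap', hginj', by rw [← himg']; exact Set.surjOn_image g' Bset⟩
  -- sums
  set CF := (Set.toFinite Cset).toFinset with hCF
  set BF := (Set.toFinite Bset).toFinset with hBF
  have hmemC : ∀ a, a ∈ CF ↔ a ∈ Cset := fun a => Set.Finite.mem_toFinset _
  have hmemB : ∀ a, a ∈ BF ↔ a ∈ Bset := fun a => Set.Finite.mem_toFinset _
  have hsum1 : ∑ b ∈ CF, P.btw s (g b) = ∑ b ∈ BF, P.btw s b := by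
    refine Finset.sum_bij (fun b _ => g b) ?_ ?_ ?_ ?_
    · intro a ha; exact (hmemB _).mpr (hgmap ((hmemC a).mp ha))
    · intro a ha a' ha' h; exact hginj ((hmemC a).mp ha) ((hmemC a').mp ha') h
    · intro b hb
      obtain ⟨a, ha, rfl⟩ := hbij.2.2 ((hmemB b).mp hb)
      exact ⟨a, (hmemC a).mpr ha, rfl⟩
    · intro a ha; rfl
  have hsum2 : ∑ b ∈ BF, P.btw s (g' b) = ∑ b ∈ CF, P.btw s b := by
    refine Finset.sum_bij (fun b _ => g' b) ?_ ?_ ?_ ?_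
    · intro a ha; exact (hmemC _).mpr (hgmap' ((hmemB a).mp ha))
    · intro a ha a' ha' h; exact hginj' ((hmemB a).mp ha) ((hmemB a').mp ha') h
    · intro b hb
      obtain ⟨a, ha, rfl⟩ := hbij'.2.2 ((hmemC b).mp hb)
      exact ⟨a, (hmemB a).mpr ha, rfl⟩
    · intro a ha; rfl
  have hle1 : ∀ b ∈ CF, P.btw s b ≤ P.btw s (g b) :=
    fun b hb => hgle b ((hmemC b).mp hb)
  have hle2 : ∀ b ∈ BF, P.btw s b ≤ P.btw s (g' b) :=
    fun b hb => hgle' b ((hmemB b).mp hb)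
  have hsums_le1 : ∑ b ∈ CF, P.btw s b ≤ ∑ b ∈ CF, P.btw s (g b) := Finset.sum_le_sum hle1
  have hsums_le2 : ∑ b ∈ BF, P.btw s b ≤ ∑ b ∈ BF, P.btw s (g' b) := Finset.sum_le_sum hle2
  have hsumeq : ∑ b ∈ CF, P.btw s b = ∑ b ∈ CF, P.btw s (g b) := by omega
  have hpt := (Finset.sum_eq_sum_iff_of_le hle1).mp hsumeq
  exact ⟨g, hbij, fun b hb => hpt b ((hmemC b).mpr hb)⟩

/-- One TTC round preserves, for every school, the number of assigned students
in each between-group class (for any class-invariant predicate `pr`). -/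
lemma ttc_count_step {μ1 : I → Option S} {st st' : Set I × (I → Option S)}
    (h : P.TTCStep μ1 st st')
    (hsv : ∀ i ∈ st.1, st.2 i = μ1 i)
    (hgrp : ∀ i ∈ st.1, ∀ j ∈ st.1, ∀ s : S, μ1 i = some s → μ1 j = some s →
      P.btw s i = P.btw s j)
    (s : S) (pr : I → Prop) (hpr : ∀ x y, P.btw s x = P.btw s y → (pr x ↔ pr y)) :
    {i | st'.2 i = some s ∧ pr i}.ncard = {i | st.2 i = some s ∧ pr i}.ncard := by
  classical
  obtain ⟨n, c, d, ⟨hcinj, hdinj, hstu, hsch⟩, hact, hass, hkeep⟩ := h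
  have hcact : ∀ j, c j ∈ st.1 := fun j => (hstu j).1
  have hμ1c : ∀ j, μ1 (c (j + 1)) = some (d j) := fun j => (hsch j).2.1
  have hμ1c' : ∀ j, μ1 (c j) = some (d (j - 1)) := by
    intro j
    have := hμ1c (j - 1)
    rwa [sub_add_cancel] at this
  have hstval : ∀ j, st.2 (c j) = some (d (j - 1)) := by
    intro j; rw [hsv _ (hcact j)]; exact hμ1c' j
  by_cases hs : ∃ j0, d j0 = s
  · obtain ⟨j0, rfl⟩ := hs
    have hbtwc : P.btw (d j0) (c j0) = P.btw (d j0) (c (j0 + 1)) := by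
      obtain ⟨z, hzact, hzμ1, hzbtw⟩ := (hstu j0).2.1
      refine hzbtw.trans (hgrp z hzact _ (hcact (j0 + 1)) _ hzμ1 (hμ1c j0))
    have hprc : pr (c j0) ↔ pr (c (j0 + 1)) := hpr _ _ hbtwc
    have hc1inZ : pr (c (j0 + 1)) → c (j0 + 1) ∈ {i | st.2 i = some (d j0) ∧ pr i} := by
      intro hp
      refine ⟨?_, hp⟩
      rw [hstval (j0 + 1), add_sub_cancel_right]
    by_cases hpc : pr (c j0)
    · -- exchange c (j0+1) for c j0
      have hZ' : {i | st'.2 i = some (d j0) ∧ pr i}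
          = insert (c j0) ({i | st.2 i = some (d j0) ∧ pr i} \ {c (j0 + 1)}) := by
        ext i
        simp only [Set.mem_setOf_eq, Set.mem_insert_iff, Set.mem_diff,
          Set.mem_singleton_iff]
        constructor
        · rintro ⟨hval, hp⟩
          by_cases hir : i ∈ Set.range c
          · obtain ⟨j, rfl⟩ := hir
            rw [hass j] at hval
            have : j = j0 := hdinj (by injection hval)
            subst this
            exact Or.inl rfl
          · rw [hkeep i hir] at hval
            refine Or.inr ⟨⟨hval, hp⟩, ?_⟩
            rintro rfl
            exact hir ⟨j0 + 1, rfl⟩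
        · rintro (rfl | ⟨⟨hval, hp⟩, hne⟩)
          · exact ⟨hass j0, hpc⟩
          · have hir : i ∉ Set.range c := by
              rintro ⟨j, rfl⟩
              rw [hstval j] at hval
              have : j - 1 = j0 := hdinj (by injection hval)
              apply hne
              rw [← this, sub_add_cancel]
            rw [hkeep i hir]
            exact ⟨hval, hp⟩
      rw [hZ']
      have hmem1 : c (j0 + 1) ∈ {i | st.2 i = some (d j0) ∧ pr i} :=
        hc1inZ (hprc.mp hpc)
      by_cases hc01 : c j0 = c (j0 + 1)
      · rw [← hc01] at hmem1 ⊢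
        rw [Set.insert_diff_singleton, Set.insert_eq_of_mem hmem1]
      · have hnotin : c j0 ∉ {i | st.2 i = some (d j0) ∧ pr i} := by
          rintro ⟨hval, -⟩
          rw [hstval j0] at hval
          have h1 : j0 - 1 = j0 := hdinj (by injection hval)
          apply hc01
          have : j0 = j0 + 1 := by
            conv_lhs => rw [← sub_add_cancel j0 1]
            rw [h1]
          rw [← this]
        exact Set.ncard_exchange hnotin hmem1
    · -- both of c j0, c (j0+1) fail pr : sets are equal
      have hpc1 : ¬ pr (c (j0 + 1)) := fun h => hpc (hprc.mpr h)
      have hZeq : {i | st'.2 i = some (d j0) ∧ pr i}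
          = {i | st.2 i = some (d j0) ∧ pr i} := by
        ext i
        simp only [Set.mem_setOf_eq]
        by_cases hir : i ∈ Set.range c
        · obtain ⟨j, rfl⟩ := hir
          constructor
          · rintro ⟨hval, hp⟩
            rw [hass j] at hval
            have : j = j0 := hdinj (by injection hval)
            subst this
            exact absurd hp hpc
          · rintro ⟨hval, hp⟩
            rw [hstval j] at hval
            have h1 : j - 1 = j0 := hdinj (by injection hval)
            have : j = j0 + 1 := by
              conv_lhs => rw [← sub_add_cancel j 1]
              rw [h1]
            subst this
            exact absurd hp hpc1
        · rw [hkeep i hir]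
      rw [hZeq]
  · -- s not on the cycle : sets are equal
    push_neg at hs
    have hZeq : {i | st'.2 i = some s ∧ pr i} = {i | st.2 i = some s ∧ pr i} := by
      ext i
      simp only [Set.mem_setOf_eq]
      by_cases hir : i ∈ Set.range c
      · obtain ⟨j, rfl⟩ := hir
        constructor
        · rintro ⟨hval, -⟩
          rw [hass j] at hval
          exact absurd (by injection hval) (hs j)
        · rintro ⟨hval, -⟩
          rw [hstval j] at hval
          exact absurd (by injection hval) (hs (j - 1))
      · rw [hkeep i hir]
    rw [hZeq]

end SchoolChoice

open SchoolChoice in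
/-- the DA-TTC outcome is in the unified core. -/
theorem da_ttc_in_unified_core {I S : Type*} [Fintype I] [Fintype S]
    (P : SchoolChoice I S) (μ1 μ2 : I → Option S)
    (h1 : P.IsDAOutcome μ1) (h2 : P.IsTTCOutcome μ1 μ2) :
    P.UnifiedCore μ2 := by
  classical
  obtain ⟨n, R, hR0, hRstep, hterm, hprop⟩ := h1
  obtain ⟨m, st, hst0, hTstep, hend, hμ2⟩ := h2
  have hst01 : (st 0).1 = {i | P.InitActive μ1 i} := by rw [hst0]
  have hst02 : (st 0).2 = μ1 := by rw [hst0]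
  -- DA facts
  have fair : ∀ (i : I) (s : S), P.pref i (μ1 i) < P.pref i (some s) →
      {j | μ1 j = some s}.ncard = P.q s ∧ ∀ j, μ1 j = some s → P.wthn s i < P.wthn s j :=
    fun i s h => P.da_fair hR0 hRstep hterm hprop h
  have ir1 : ∀ i, P.pref i none ≤ P.pref i (μ1 i) :=
    fun i => (hprop i).2 none (by rintro s hs; cases hs)
  -- monotone active sets
  have hmono : ∀ k l, k ≤ l → l ≤ m → (st l).1 ⊆ (st k).1 := by
    intro k l hkl
    induction l, hkl using Nat.le_induction with
    | base => intro _; exact subset_rfl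
    | succ l hl ih =>
      intro hlm
      exact subset_trans (P.ttc_act_subset (hTstep l (by omega))) (ih (by omega))
  -- exit times
  have hexit : ∀ i ∈ (st 0).1, ∃ k, k < m ∧ i ∈ (st k).1 ∧ i ∉ (st (k + 1)).1 := by
    intro i hi
    have hnm : i ∉ (st m).1 := by rw [hend]; exact Set.notMem_empty i
    have hex : ∃ k, i ∉ (st k).1 := ⟨m, hnm⟩
    have hk0spec : i ∉ (st (Nat.find hex)).1 := Nat.find_spec hex
    have hk0le : Nat.find hex ≤ m := Nat.find_min' hex hnm
    have hk0pos : Nat.find hex ≠ 0 := by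
      intro h; rw [h] at hk0spec; exact hk0spec hi
    have hmem : i ∈ (st (Nat.find hex - 1)).1 := by
      by_contra hc
      have := Nat.find_min' hex hc
      omega
    refine ⟨Nat.find hex - 1, by omega, hmem, ?_⟩
    rw [show Nat.find hex - 1 + 1 = Nat.find hex by omega]
    exact hk0spec
  choose! tm htm using hexit
  have hmemAct : ∀ z k, k ≤ m → (z ∈ (st k).1 ↔ z ∈ (st 0).1 ∧ k ≤ tm z) := by
    intro z k hkm
    constructor
    · intro hz
      have hz0 : z ∈ (st 0).1 := hmono 0 k (Nat.zero_le k) hkm hz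
      refine ⟨hz0, ?_⟩
      by_contra hlt
      push_neg at hlt
      exact (htm z hz0).2.2 (hmono (tm z + 1) k (by omega) hkm hz)
    · rintro ⟨hz0, hk⟩
      exact hmono k (tm z) hk (le_of_lt (htm z hz0).1) (htm z hz0).2.1
  have hkeepafter : ∀ i k, k < m → i ∉ (st (k + 1)).1 → μ2 i = (st (k + 1)).2 i := by
    intro i k hk hni
    have key : ∀ l, k + 1 ≤ l → l ≤ m → (st l).2 i = (st (k + 1)).2 i := by
      intro l hl
      induction l, hl using Nat.le_induction with
      | base => intro _; rfl
      | succ l hl ih =>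
        intro hlm
        rw [P.ttc_keep_inactive (hTstep l (by omega))
          (fun hc => hni (hmono (k + 1) l hl (by omega) hc))]
        exact ih (by omega)
    rw [hμ2]; exact key m (by omega) le_rfl
  have hactval : ∀ k, k ≤ m → ∀ i ∈ (st k).1, (st k).2 i = μ1 i := by
    intro k
    induction k with
    | zero => intro _ i _; rw [hst02]
    | succ k ih =>
      intro hkm i hi
      have hik : i ∈ (st k).1 := P.ttc_act_subset (hTstep k (by omega)) hi
      rw [P.ttc_keep_active (hTstep k (by omega)) hi]
      exact ih (by omega) i hik
  have hμ2never : ∀ i, i ∉ (st 0).1 → μ2 i = μ1 i := by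
    intro i hi
    have key : ∀ l, l ≤ m → (st l).2 i = μ1 i := by
      intro l
      induction l with
      | zero => intro _; rw [hst02]
      | succ l ih =>
        intro hlm
        rw [P.ttc_keep_inactive (hTstep l (by omega))
          (fun hc => hi (hmono 0 l (Nat.zero_le l) (by omega) hc))]
        exact ih (by omega)
    rw [hμ2]; exact key m le_rfl
  have hexitdata : ∀ i ∈ (st 0).1, ∃ s, μ2 i = some s ∧
      P.StuPoints μ1 ((st (tm i)).1) i s := by
    intro i hi
    obtain ⟨hklt, hik, hik1⟩ := htm i hi
    obtain ⟨nn, c, d, ⟨hcinj, hdinj, hstu, hsch⟩, hact, hass, hkeep⟩ := hTstep (tm i) hklt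
    have hir : i ∈ Set.range c := by
      rw [hact] at hik1
      by_contra hc
      exact hik1 ⟨hik, hc⟩
    obtain ⟨j, rfl⟩ := hir
    refine ⟨d j, ?_, hstu j⟩
    rw [hkeepafter _ (tm (c j)) hklt hik1, hass j]
  have dom : ∀ i, P.pref i (μ1 i) ≤ P.pref i (μ2 i) := by
    intro i
    by_cases hi : i ∈ (st 0).1
    · obtain ⟨s, hμ2i, hstu⟩ := hexitdata i hi
      have hi' : P.InitActive μ1 i := by rw [hst01] at hi; exact hi
      obtain ⟨si, hμ1i, -⟩ := hi'
      rw [hμ2i, hμ1i]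
      exact hstu.2.2 si ⟨i, hstu.1, hμ1i, rfl⟩
    · rw [hμ2never i hi]
  have hgrpact : ∀ k, k ≤ m → ∀ i ∈ (st k).1, ∀ j ∈ (st k).1, ∀ s : S,
      μ1 i = some s → μ1 j = some s → P.btw s i = P.btw s j := by
    intro k hkm i hi j hj s hμi hμj
    have hi0 : P.InitActive μ1 i := by
      have := hmono 0 k (Nat.zero_le k) hkm hi
      rwa [hst01] at this
    have hj0 : P.InitActive μ1 j := by
      have := hmono 0 k (Nat.zero_le k) hkm hj
      rwa [hst01] at this
    obtain ⟨si, hsi, hmini⟩ := hi0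
    obtain ⟨sj, hsj, hminj⟩ := hj0
    have hsis : si = s := by rw [hμi] at hsi; exact Option.some_inj.mp hsi.symm
    have hsjs : sj = s := by rw [hμj] at hsj; exact Option.some_inj.mp hsj.symm
    subst hsis
    subst hsjs
    exact le_antisymm (hmini j hμj) (hminj i hμi)
  have cntk : ∀ k, k ≤ m → ∀ (s : S) (pr : I → Prop),
      (∀ x y, P.btw s x = P.btw s y → (pr x ↔ pr y)) →
      {i | (st k).2 i = some s ∧ pr i}.ncard = {i | μ1 i = some s ∧ pr i}.ncard := by
    intro k
    induction k with
    | zero => intro _ s pr _; rw [hst02]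
    | succ k ih =>
      intro hkm s pr hpr
      rw [P.ttc_count_step (hTstep k (by omega)) (hactval k (by omega))
        (hgrpact k (by omega)) s pr hpr]
      exact ih (by omega) s pr hpr
  have cnt1 : ∀ s : S, {i | μ2 i = some s}.ncard = {i | μ1 i = some s}.ncard := by
    intro s
    have := cntk m le_rfl s (fun _ => True) (fun _ _ _ => Iff.rfl)
    rw [← hμ2] at this
    simpa using this
  have wit : ∀ x s, μ2 x = some s →
      (x ∉ (st 0).1 ∧ μ1 x = some s) ∨
      (x ∈ (st 0).1 ∧ ∃ z ∈ (st (tm x)).1, μ1 z = some s ∧ P.btw s z = P.btw s x) := by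
    intro x s hx
    by_cases h0 : x ∈ (st 0).1
    · obtain ⟨s', hμ2x, hstu⟩ := hexitdata x h0
      obtain rfl : s = s' := by rw [hμ2x] at hx; exact Option.some_inj.mp hx.symm
      obtain ⟨z, hz, hzμ1, hzbtw⟩ := hstu.2.1
      exact Or.inr ⟨h0, z, hz, hzμ1, hzbtw.symm⟩
    · exact Or.inl ⟨h0, by rw [← hμ2never x h0]; exact hx⟩
  constructor
  · -- no between-group blocking
    intro A
    rintro ⟨ν, hνm, hBE, hPw, i, hiA, hstrict⟩
    rcases hνi : ν i with _ | s
    · rw [hνi] at hstrict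
      have h1 := ir1 i
      have h2 := dom i
      omega
    · rw [hνi] at hstrict
      have henvy1 : P.pref i (μ1 i) < P.pref i (some s) := lt_of_le_of_lt (dom i) hstrict
      obtain ⟨hfull, habove⟩ := fair i s henvy1
      rcases hBE i hiA s hνi with ⟨j, hjμ2, hbtwlt⟩ | hlt
      · have hz : ∃ z, μ1 z = some s ∧ P.btw s z = P.btw s j := by
          rcases wit j s hjμ2 with ⟨-, hj1⟩ | ⟨-, z, -, hz1, hz2⟩
          · exact ⟨j, hj1, rfl⟩
          · exact ⟨z, hz1, hz2⟩
        obtain ⟨z, hz1, hz2⟩ := hz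
        have h3 : P.wthn s z < P.wthn s i := P.refines s z i (by rw [hz2]; exact hbtwlt)
        have h4 := habove z hz1
        omega
      · rw [cnt1 s, hfull] at hlt
        exact absurd hlt (lt_irrefl _)
  · -- no within-group blocking
    intro A
    rintro ⟨ν, hνm, hWE, hPw, i0, hi0A, hi0strict⟩
    have hsome : ∀ x, x ∈ A → P.pref x (μ2 x) < P.pref x (ν x) → ∃ s, ν x = some s := by
      intro x hxA hxs
      rcases hν : ν x with _ | s
      · rw [hν] at hxs
        have h1 := ir1 x
        have h2 := dom x
        omega
      · exact ⟨s, rfl⟩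
    -- the pack of facts at a critical target
    have pack : ∀ y s, y ∈ A → ν y = some s → P.pref y (μ1 y) < P.pref y (some s) →
        (∀ z, μ1 z = some s → P.wthn s y < P.wthn s z) ∧
        (∀ z, μ1 z = some s → P.btw s z = P.btw s y → z ∈ A ∧ z ∈ (st 0).1) ∧
        (∃ z, μ1 z = some s ∧ P.btw s z = P.btw s y) ∧
        (∀ v, {x | ν x = some s ∧ P.btw s x = v}.ncard
          = {x | μ2 x = some s ∧ P.btw s x = v}.ncard) := by
      intro y s hyA hνy henvy
      obtain ⟨hfull, habove⟩ := fair y s henvy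
      obtain ⟨hsim, hint⟩ := hWE s ⟨y, hyA, hνy⟩
      have hc1 : {j | ν j = some s}.ncard = {j | μ2 j = some s}.ncard :=
        le_antisymm hsim.2.1 hsim.1.1
      have hcq : {j | ν j = some s}.ncard = P.q s := by rw [hc1, cnt1 s, hfull]
      have hIempty : P.InterruptPairs A ν s = ∅ := by
        rw [hcq, Nat.sub_self, Nat.le_zero] at hint
        exact (Set.ncard_eq_zero (Set.toFinite _)).mp hint
      have hUA : ∀ b, P.btw s b = P.btw s y → P.wthn s y ≤ P.wthn s b → b ∈ A := by
        intro b hb1 hb2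
        by_contra hbA
        have hmem : (y, b) ∈ P.InterruptPairs A ν s := ⟨hyA, hνy, ⟨hb1, hb2⟩, hbA⟩
        rw [hIempty] at hmem
        exact hmem
      have hOA : ∀ z, μ1 z = some s → P.btw s z = P.btw s y → z ∈ A ∧ z ∈ (st 0).1 := by
        intro z hz1 hz2
        refine ⟨hUA z hz2 (le_of_lt (habove z hz1)), ?_⟩
        rw [hst01]
        refine ⟨s, hz1, ?_⟩
        intro j hj
        by_contra hlt
        push_neg at hlt
        rw [hz2] at hlt
        have h5 := P.refines s j y hlt
        have h6 := habove j hj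
        omega
      obtain ⟨g, hbij, hgbtw⟩ := P.setGE_rigid hsim.2 hsim.1
      have hyν : y ∈ {j | ν j = some s} := hνy
      have hgyμ2 : g y ∈ {j | μ2 j = some s} := hbij.1 hyν
      have hgy : P.btw s y = P.btw s (g y) := hgbtw y hyν
      have hOz : ∃ z, μ1 z = some s ∧ P.btw s z = P.btw s y := by
        rcases wit (g y) s hgyμ2 with ⟨-, hμ1gy⟩ | ⟨-, z, -, hz1, hz2⟩
        · exact ⟨g y, hμ1gy, hgy.symm⟩
        · exact ⟨z, hz1, by rw [hz2, ← hgy]⟩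
      have hgc : ∀ v, {x | ν x = some s ∧ P.btw s x = v}.ncard
          = {x | μ2 x = some s ∧ P.btw s x = v}.ncard := by
        intro v
        have himg : g '' {x | ν x = some s ∧ P.btw s x = v}
            = {x | μ2 x = some s ∧ P.btw s x = v} := by
          ext b
          constructor
          · rintro ⟨a, ⟨ha1, ha2⟩, rfl⟩
            exact ⟨hbij.1 ha1, by rw [← hgbtw a ha1]; exact ha2⟩
          · rintro ⟨hb1, hb2⟩
            obtain ⟨a, ha, rfl⟩ := hbij.2.2 hb1
            exact ⟨a, ⟨ha, by rw [hgbtw a ha]; exact hb2⟩, rfl⟩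
        rw [← himg,
          Set.ncard_image_of_injOn (hbij.2.1.mono (fun x hx => hx.1))]
      exact ⟨habove, hOA, hOz, hgc⟩
    -- elements of TS : last-exit times of the original occupants of targets
    set TS : Set ℕ := {t | ∃ y s z, y ∈ A ∧ ν y = some s ∧
      P.pref y (μ2 y) < P.pref y (some s) ∧ μ1 z = some s ∧ P.btw s z = P.btw s y ∧
      (∀ z', μ1 z' = some s → P.btw s z' = P.btw s y → tm z' ≤ tm z) ∧ tm z = t}
      with hTSdef
    have mkTS : ∀ y s, y ∈ A → ν y = some s → P.pref y (μ2 y) < P.pref y (some s) →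
        ∃ z, μ1 z = some s ∧ P.btw s z = P.btw s y ∧
          (∀ z', μ1 z' = some s → P.btw s z' = P.btw s y → tm z' ≤ tm z) ∧ tm z ∈ TS := by
      intro y s hyA hνy hstr
      have henvy := lt_of_le_of_lt (dom y) hstr
      obtain ⟨-, -, ⟨z0, hz01, hz02⟩, -⟩ := pack y s hyA hνy henvy
      have hOne : ((Set.toFinite {z | μ1 z = some s ∧ P.btw s z = P.btw s y}).toFinset).Nonempty := by
        rw [Set.Finite.toFinset_nonempty]
        exact ⟨z0, hz01, hz02⟩
      obtain ⟨zM, hzM, hzMmax⟩ := Finset.exists_max_image _ tm hOne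
      rw [Set.Finite.mem_toFinset] at hzM
      have hmax : ∀ z', μ1 z' = some s → P.btw s z' = P.btw s y → tm z' ≤ tm zM :=
        fun z' h1 h2 => hzMmax z' (by rw [Set.Finite.mem_toFinset]; exact ⟨h1, h2⟩)
      refine ⟨zM, hzM.1, hzM.2, hmax, ?_⟩
      rw [hTSdef]
      exact ⟨y, s, zM, hyA, hνy, hstr, hzM.1, hzM.2, hmax, rfl⟩
    have hTSne : TS.Nonempty := by
      obtain ⟨s0, hs0⟩ := hsome i0 hi0A hi0strict
      rw [hs0] at hi0strict
      obtain ⟨z, -, -, -, hz⟩ := mkTS i0 s0 hi0A hs0 hi0strict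
      exact ⟨tm z, hz⟩
    have htmem := Nat.sInf_mem hTSne
    obtain ⟨ystar, sstar, zstar, hyA', hνy', hstr', hzs1, hzs2, hzmax, hzt⟩ :
        ∃ y s z, y ∈ A ∧ ν y = some s ∧
          P.pref y (μ2 y) < P.pref y (some s) ∧ μ1 z = some s ∧ P.btw s z = P.btw s y ∧
          (∀ z', μ1 z' = some s → P.btw s z' = P.btw s y → tm z' ≤ tm z) ∧
          tm z = sInf TS := htmem
    have henvy' := lt_of_le_of_lt (dom ystar) hstr'
    obtain ⟨haboveS, hOAS, -, hgcS⟩ := pack ystar sstar hyA' hνy' henvy'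
    -- general contradiction for ever-active strict improvers exiting no later than sInf TS
    have contraT : ∀ x s', x ∈ A → ν x = some s' →
        P.pref x (μ2 x) < P.pref x (some s') →
        x ∈ (st 0).1 → tm x ≤ sInf TS → False := by
      intro x s' hxA hνx hxstr hx0 hxt
      obtain ⟨zM, hzM1, hzM2, hzMmax, hzMTS⟩ := mkTS x s' hxA hνx hxstr
      have hxenvy := lt_of_le_of_lt (dom x) hxstr
      obtain ⟨-, hOAx, -, -⟩ := pack x s' hxA hνx hxenvy
      have hK2 : ∀ z, μ1 z = some s' → P.btw s' z = P.btw s' x → tm z < tm x := by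
        intro z h1 h2
        by_contra hge
        push_neg at hge
        have hz0 : z ∈ (st 0).1 := (hOAx z h1 h2).2
        have hzact : z ∈ (st (tm x)).1 := by
          rw [hmemAct z (tm x) (le_of_lt (htm x hx0).1)]
          exact ⟨hz0, hge⟩
        obtain ⟨sx, hμ2x, hstux⟩ := hexitdata x hx0
        have h5 := hstux.2.2 s' ⟨z, hzact, h1, h2.symm⟩
        rw [hμ2x] at hxstr
        omega
      have h1 := hK2 zM hzM1 hzM2
      have h2 : sInf TS ≤ tm zM := Nat.sInf_le hzMTS
      omega
    -- the group imbalance at sstar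
    have hXY := hgcS (P.btw sstar ystar)
    have hyY : ystar ∈ {x | ν x = some sstar ∧ P.btw sstar x = P.btw sstar ystar} :=
      ⟨hνy', rfl⟩
    have hyX : ystar ∉ {x | μ2 x = some sstar ∧ P.btw sstar x = P.btw sstar ystar} := by
      rintro ⟨hμ2y, -⟩
      rw [hμ2y] at hstr'
      exact lt_irrefl _ hstr'
    obtain ⟨xb, hxbX, hxbY⟩ : ∃ xb,
        xb ∈ {x | μ2 x = some sstar ∧ P.btw sstar x = P.btw sstar ystar} ∧
        xb ∉ {x | ν x = some sstar ∧ P.btw sstar x = P.btw sstar ystar} := by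
      by_contra hc
      push_neg at hc
      have hsub : {x | μ2 x = some sstar ∧ P.btw sstar x = P.btw sstar ystar}
          ⊆ {x | ν x = some sstar ∧ P.btw sstar x = P.btw sstar ystar} \ {ystar} := by
        intro x hx
        exact ⟨hc x hx, fun h => hyX (h ▸ hx)⟩
      have h1 := Set.ncard_le_ncard hsub (Set.toFinite _)
      have h2 := Set.ncard_diff_singleton_lt_of_mem hyY (Set.toFinite _)
      omega
    obtain ⟨hxbμ2, hxbbtw⟩ := hxbX
    have hxb0ex : xb ∈ (st 0).1 ∧ ∃ z ∈ (st (tm xb)).1,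
        μ1 z = some sstar ∧ P.btw sstar z = P.btw sstar xb := by
      rcases wit xb sstar hxbμ2 with ⟨h0, hμ1xb⟩ | h
      · exact absurd (hOAS xb hμ1xb (by rw [hxbbtw])).2 h0
      · exact h
    obtain ⟨hxb0, z1, hz1act, hz1μ, hz1btw⟩ := hxb0ex
    have hxbt : tm xb ≤ sInf TS := by
      have hz1O : tm z1 ≤ tm zstar := hzmax z1 hz1μ (by rw [hz1btw, hxbbtw])
      have h6 : tm xb ≤ tm z1 :=
        ((hmemAct z1 (tm xb) (le_of_lt (htm xb hxb0).1)).mp hz1act).2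
      omega
    by_cases hxbA : xb ∈ A
    · -- xb is itself a strict improver, exiting too early
      have hxbν : ν xb ≠ some sstar := fun h => hxbY ⟨h, hxbbtw⟩
      have hxbw : P.pref xb (μ2 xb) ≤ P.pref xb (ν xb) := hPw xb hxbA
      have hxbstr : P.pref xb (μ2 xb) < P.pref xb (ν xb) := by
        rcases lt_or_eq_of_le hxbw with h | h
        · exact h
        · exfalso
          apply hxbν
          rw [← P.pref_inj xb h]
          exact hxbμ2
      obtain ⟨s'', hs''⟩ := hsome xb hxbA hxbstr
      rw [hs''] at hxbstr
      exact contraT xb s'' hxbA hs'' hxbstr hxb0 hxbt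
    · -- xb is outside the coalition : walk its trading cycle
      obtain ⟨hkm, hxbk, hxbk1⟩ := htm xb hxb0
      obtain ⟨nn, c, d, ⟨hcinj, hdinj, hstu, hsch⟩, hact, hass, hkeep⟩ :=
        hTstep (tm xb) hkm
      obtain ⟨jh, hjh⟩ : xb ∈ Set.range c := by
        rw [hact] at hxbk1
        by_contra hc
        exact hxbk1 ⟨hxbk, hc⟩
      have hdjh : d jh = sstar := by
        have hkk := hkeepafter xb (tm xb) hkm hxbk1
        rw [hxbμ2] at hkk
        have h9 := hass jh
        rw [hjh] at h9
        have h10 := hkk.trans h9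
        exact (Option.some_inj.mp h10).symm
      have hcact : ∀ j, c j ∈ (st (tm xb)).1 := fun j => (hstu j).1
      have hc0 : ∀ j, c j ∈ (st 0).1 :=
        fun j => hmono 0 (tm xb) (Nat.zero_le _) (le_of_lt hkm) (hcact j)
      have hcout : ∀ j, c j ∉ (st (tm xb + 1)).1 := by
        intro j
        rw [hact]
        rintro ⟨-, hnr⟩
        exact hnr ⟨j, rfl⟩
      have hctm : ∀ j, tm (c j) = tm xb := by
        intro j
        have h2 := (hmemAct (c j) (tm xb) (le_of_lt hkm)).mp (hcact j)
        by_contra hne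
        have hgt : tm xb < tm (c j) := lt_of_le_of_ne h2.2 (fun h => hne h.symm)
        exact hcout j (by
          rw [hmemAct (c j) (tm xb + 1) (by omega)]
          exact ⟨hc0 j, hgt⟩)
      have hcμ2 : ∀ j, μ2 (c j) = some (d j) := by
        intro j
        rw [hkeepafter (c j) (tm xb) hkm (hcout j), hass j]
      have hcμ1 : ∀ j, μ1 (c (j + 1)) = some (d j) := fun j => (hsch j).2.1
      have hbtwpt : ∀ j j', μ1 (c j') = some (d j) →
          P.btw (d j) (c j) = P.btw (d j) (c j') := by
        intro j j' hμ
        obtain ⟨z, hzact, hzμ, hzbtw⟩ := (hstu j).2.1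
        exact hzbtw.trans
          (hgrpact (tm xb) (le_of_lt hkm) z hzact (c j') (hcact j') (d j) hzμ hμ)
      rcases Nat.eq_zero_or_pos nn with hnn | hnn
      · -- trivial cycle : xb keeps its school, so xb ∈ A, contradiction
        subst hnn
        have heq1 : jh + 1 = jh := by
          apply Fin.ext
          have h1 := (jh + 1).isLt
          have h2 := jh.isLt
          omega
        have hμ1xb : μ1 xb = some sstar := by
          rw [← hjh, ← heq1, hcμ1 jh, hdjh]
        exact hxbA (hOAS xb hμ1xb (by rw [hxbbtw])).1
      · have h10 : (1 : Fin (nn + 1)) ≠ 0 := by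
          intro h
          have hc1 := congrArg Fin.val h
          rw [Fin.val_zero, Fin.val_one', Nat.mod_eq_of_lt (by omega)] at hc1
          exact one_ne_zero hc1
        open Fin.NatCast Fin.CommRing in
        have walk : ∀ l : ℕ, c (jh + 1 + (l : Fin (nn + 1))) ∈ A := by
          intro l
          induction l with
          | zero =>
            simp only [Nat.cast_zero, add_zero]
            have h2 := hbtwpt jh (jh + 1) (hcμ1 jh)
            rw [hdjh, hjh] at h2
            have hb : P.btw sstar (c (jh + 1)) = P.btw sstar ystar := by
              rw [← h2, hxbbtw]
            exact (hOAS (c (jh + 1)) (by rw [hcμ1 jh, hdjh]) hb).1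
          | succ l ih =>
            set w := c (jh + 1 + (l : Fin (nn + 1))) with hw
            set jw : Fin (nn + 1) := jh + (l : Fin (nn + 1)) with hjw
            have hidx : jh + 1 + (l : Fin (nn + 1)) = jw + 1 := by
              rw [hjw]; ring
            rw [hidx] at hw
            have hμ1w : μ1 w = some (d jw) := by rw [hw]; exact hcμ1 jw
            have hμ2w : μ2 w = some (d (jw + 1)) := by rw [hw]; exact hcμ2 (jw + 1)
            have hdne : d (jw + 1) ≠ d jw := by
              intro h
              exact h10 (add_eq_left.mp (hdinj h))
            have hstrw : P.pref w (μ1 w) < P.pref w (μ2 w) := by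
              rcases lt_or_eq_of_le (dom w) with h | h
              · exact h
              · exfalso
                apply hdne
                have h7 := P.pref_inj w h
                rw [hμ1w, hμ2w] at h7
                exact (Option.some_inj.mp h7).symm
            have hwA : w ∈ A := ih
            have hwweak : P.pref w (μ2 w) ≤ P.pref w (ν w) := hPw w hwA
            have hidx2 : jh + 1 + ((l + 1 : ℕ) : Fin (nn + 1)) = jw + 1 + 1 := by
              rw [hjw]; push_cast; ring
            rw [hidx2]
            by_cases hνw : ν w = μ2 w
            · have hνws : ν w = some (d (jw + 1)) := by rw [hνw, hμ2w]
              have henvyw : P.pref w (μ1 w) < P.pref w (some (d (jw + 1))) := by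
                rw [← hμ2w]; exact hstrw
              obtain ⟨-, hOAw, -, -⟩ := pack w (d (jw + 1)) hwA hνws henvyw
              have hμ1next : μ1 (c (jw + 1 + 1)) = some (d (jw + 1)) := hcμ1 (jw + 1)
              have hbnext : P.btw (d (jw + 1)) (c (jw + 1 + 1)) = P.btw (d (jw + 1)) w := by
                have h8 := hbtwpt (jw + 1) (jw + 1 + 1) (hcμ1 (jw + 1))
                rw [← hw] at h8
                exact h8.symm
              exact (hOAw (c (jw + 1 + 1)) hμ1next hbnext).1
            · have hstr2 : P.pref w (μ2 w) < P.pref w (ν w) :=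
                lt_of_le_of_ne hwweak (fun h => hνw (P.pref_inj w h).symm)
              obtain ⟨s'', hs''⟩ := hsome w hwA hstr2
              rw [hs''] at hstr2
              have hwt : tm w ≤ sInf TS := by
                rw [hw, hctm]
                exact hxbt
              exact (contraT w s'' hwA hs'' hstr2 (by rw [hw]; exact hc0 _) hwt).elim
        open Fin.NatCast Fin.CommRing in
        have hfin : jh + 1 + ((nn : ℕ) : Fin (nn + 1)) = jh := by
          have h1 : ((nn + 1 : ℕ) : Fin (nn + 1)) = 0 := Fin.natCast_self (nn + 1)
          calc jh + 1 + ((nn : ℕ) : Fin (nn + 1))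
              = jh + ((nn + 1 : ℕ) : Fin (nn + 1)) := by push_cast; ring
            _ = jh := by rw [h1, add_zero]
        have hwalk := walk nn
        rw [hfin, hjh] at hwalk
        exact hxbA hwalk
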